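/- Let G ↪ X and H ↪ Y be continuous actions of countable groups on compact metrizable spaces. Then every ergodic invariant Borel probability measure μ for the product action G × H ↪ X × Y is a product measure: μ = μ_X × μ_Y, where μ_X and μ_Y are the marginals of μ on X and Y, which are G-invariant and H-invariant respectively. -/

import Mathlib

open MeasureTheory
open scoped ENNReal

lemma aux_ae_const_of_levels {α : Type*} [MeasurableSpace α] (ν : Measure α)
    [IsProbabilityMeasure ν] (f : α → ℝ≥0∞)
    (hlev : ∀ t : ℝ≥0∞, MeasurableSet {x | f x < t})
    (h : ∀ t : ℝ≥0∞, ν {x | f x < t} = 0 ∨ ν {x | f x < t} = 1) :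
    ∃ c : ℝ≥0∞, f =ᵐ[ν] fun _ => c := by
  set S : Set ℝ≥0∞ := {t | ν {x | f x < t} = 0} with hS
  have hSlow : ∀ {s t : ℝ≥0∞}, s ≤ t → t ∈ S → s ∈ S := by
    intro s t hst ht
    exact le_antisymm (le_trans (measure_mono (fun x hx => lt_of_lt_of_le hx hst)) ht.le)
      (zero_le)
  set c := sSup S with hc
  refine ⟨c, ?_⟩
  have hlt : ν {x | f x < c} = 0 := by
    have hsub : {x | f x < c} ⊆ ⋃ q : ℚ, {x | f x < (Real.toNNReal q : ℝ≥0∞)} ∩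
        {x | (Real.toNNReal q : ℝ≥0∞) < c} := by
      intro x hx
      obtain ⟨q, _, h1, h2⟩ := ENNReal.lt_iff_exists_rat_btwn.1 hx
      exact Set.mem_iUnion.2 ⟨q, h1, h2⟩
    refine measure_mono_null hsub (measure_iUnion_null fun q => ?_)
    by_cases hq : (Real.toNNReal q : ℝ≥0∞) < c
    · have hmem : (Real.toNNReal q : ℝ≥0∞) ∈ S := by
        obtain ⟨s, hs, hqs⟩ := lt_sSup_iff.1 hq
        exact hSlow hqs.le hs
      exact measure_mono_null (Set.inter_subset_left) hmem
    · have : {x | (Real.toNNReal q : ℝ≥0∞) < c} = (∅ : Set α) := by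
        ext x; simp [hq]
      simp [this]
  have hgt : ν {x | c < f x} = 0 := by
    have hsub : {x | c < f x} ⊆ ⋃ q : ℚ, ({x | f x < (Real.toNNReal q : ℝ≥0∞)})ᶜ ∩
        {x | c < (Real.toNNReal q : ℝ≥0∞)} := by
      intro x hx
      obtain ⟨q, _, h1, h2⟩ := ENNReal.lt_iff_exists_rat_btwn.1 hx
      exact Set.mem_iUnion.2 ⟨q, fun hlt' => absurd h2 (not_lt.2 hlt'.le), h1⟩
    refine measure_mono_null hsub (measure_iUnion_null fun q => ?_)
    by_cases hq : c < (Real.toNNReal q : ℝ≥0∞)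
    · have hq1 : ν {x | f x < (Real.toNNReal q : ℝ≥0∞)} = 1 := by
        rcases h (Real.toNNReal q) with h' | h'
        · have hmem : (Real.toNNReal q : ℝ≥0∞) ∈ S := h'
          exact absurd (le_sSup hmem) (not_le.2 hq)
        · exact h'
      have : ν ({x | f x < (Real.toNNReal q : ℝ≥0∞)})ᶜ = 0 := by
        rw [measure_compl (hlev _) (measure_ne_top _ _), hq1, measure_univ, tsub_self]
      exact measure_mono_null (Set.inter_subset_left) this
    · have : {x | c < (Real.toNNReal q : ℝ≥0∞)} = (∅ : Set α) := by
        ext x; simp [hq]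
      simp [this]
  have hsub : {x | f x ≠ c} ⊆ {x | f x < c} ∪ {x | c < f x} := by
    intro x hx
    rcases lt_or_gt_of_ne hx with h' | h'
    · exact Or.inl h'
    · exact Or.inr h'
  exact measure_mono_null hsub (measure_union_null hlt hgt)

/-- An ergodic invariant measure for a product action is a product of its marginals,
which are invariant for the factor actions. -/
theorem ergodic_product_action_measure_is_product {G H X Y : Type*}
    [Group G] [Countable G] [Group H] [Countable H]
    [TopologicalSpace X] [CompactSpace X] [TopologicalSpace.MetrizableSpace X]
    [TopologicalSpace Y] [CompactSpace Y] [TopologicalSpace.MetrizableSpace Y]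
    [MeasurableSpace X] [BorelSpace X] [MeasurableSpace Y] [BorelSpace Y]
    [MulAction G X] [ContinuousConstSMul G X]
    [MulAction H Y] [ContinuousConstSMul H Y]
    (μ : Measure (X × Y)) [IsProbabilityMeasure μ]
    (hinv : ∀ (g : G) (h : H),
      Measure.map (fun p : X × Y => (g • p.1, h • p.2)) μ = μ)
    (herg : ∀ A : Set (X × Y), MeasurableSet A →
      (∀ (g : G) (h : H), (fun p : X × Y => (g • p.1, h • p.2)) ⁻¹' A = A) →
      μ A = 0 ∨ μ A = 1) :
    μ = (μ.map Prod.fst).prod (μ.map Prod.snd) ∧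
    (∀ g : G, Measure.map (fun x : X => g • x) (μ.map Prod.fst) = μ.map Prod.fst) ∧
    (∀ h : H, Measure.map (fun y : Y => h • y) (μ.map Prod.snd) = μ.map Prod.snd) := by
  have hmgX : ∀ g : G, Measurable (fun x : X => g • x) :=
    fun g => (continuous_const_smul g).measurable
  have hmhY : ∀ h : H, Measurable (fun y : Y => h • y) :=
    fun h => (continuous_const_smul h).measurable
  have hmT : ∀ (g : G) (h : H), Measurable (fun p : X × Y => (g • p.1, h • p.2)) :=
    fun g h => ((hmgX g).comp measurable_fst).prodMk ((hmhY h).comp measurable_snd)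
  haveI : IsProbabilityMeasure (μ.map Prod.fst) :=
    Measure.isProbabilityMeasure_map measurable_fst.aemeasurable
  haveI : IsProbabilityMeasure (μ.map Prod.snd) :=
    Measure.isProbabilityMeasure_map measurable_snd.aemeasurable
  -- invariance of the marginals
  have hmarX : ∀ g : G, Measure.map (fun x : X => g • x) (μ.map Prod.fst) = μ.map Prod.fst := by
    intro g
    calc Measure.map (fun x : X => g • x) (μ.map Prod.fst)
        = μ.map ((fun x : X => g • x) ∘ Prod.fst) := Measure.map_map (hmgX g) measurable_fst
      _ = μ.map (Prod.fst ∘ (fun p : X × Y => (g • p.1, (1 : H) • p.2))) := rfl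
      _ = (μ.map (fun p : X × Y => (g • p.1, (1 : H) • p.2))).map Prod.fst :=
          (Measure.map_map measurable_fst (hmT g 1)).symm
      _ = μ.map Prod.fst := by rw [hinv g 1]
  have hmarY : ∀ h : H, Measure.map (fun y : Y => h • y) (μ.map Prod.snd) = μ.map Prod.snd := by
    intro h
    calc Measure.map (fun y : Y => h • y) (μ.map Prod.snd)
        = μ.map ((fun y : Y => h • y) ∘ Prod.snd) := Measure.map_map (hmhY h) measurable_snd
      _ = μ.map (Prod.snd ∘ (fun p : X × Y => ((1 : G) • p.1, h • p.2))) := rfl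
      _ = (μ.map (fun p : X × Y => ((1 : G) • p.1, h • p.2))).map Prod.snd :=
          (Measure.map_map measurable_snd (hmT 1 h)).symm
      _ = μ.map Prod.snd := by rw [hinv 1 h]
  refine ⟨?_, hmarX, hmarY⟩
  -- the rectangle computation
  have key : ∀ B : Set Y, MeasurableSet B → ∀ A : Set X, MeasurableSet A →
      μ (A ×ˢ B) = μ.map Prod.fst A * μ.map Prod.snd B := by
    intro B hB
    set mX : Measure X := μ.map Prod.fst with hmX
    set ρ : Measure X := (μ.restrict (Set.univ ×ˢ B)).map Prod.fst with hρdef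
    have hρ : ∀ A : Set X, MeasurableSet A → ρ A = μ (A ×ˢ B) := by
      intro A hA
      rw [hρdef, Measure.map_apply measurable_fst hA,
        Measure.restrict_apply (measurable_fst hA)]
      congr 1
      ext p
      simp [Set.mem_prod, and_comm]
    haveI : IsFiniteMeasure ρ := ⟨by
      rw [hρ _ MeasurableSet.univ]; exact measure_lt_top μ _⟩
    have hac : ρ ≪ mX := by
      refine Measure.AbsolutelyContinuous.mk fun s hs h0 => ?_
      rw [hmX, Measure.map_apply measurable_fst hs] at h0
      rw [hρ s hs]
      exact measure_mono_null (fun p hp => hp.1) h0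
    set φ : X → ℝ≥0∞ := ρ.rnDeriv mX with hφdef
    have hφm : Measurable φ := Measure.measurable_rnDeriv ρ mX
    have hw : mX.withDensity φ = ρ := Measure.withDensity_rnDeriv_eq ρ mX hac
    -- invariance of ρ
    have hρinv : ∀ g : G, ρ.map (fun x : X => g • x) = ρ := by
      intro g
      have hpre : (fun p : X × Y => (g • p.1, (1 : H) • p.2)) ⁻¹' (Set.univ ×ˢ B) =
          Set.univ ×ˢ B := by
        ext p; simp [Set.mem_prod]
      have hSm : MeasurableSet (Set.univ ×ˢ B : Set (X × Y)) :=
        MeasurableSet.univ.prod hB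
      calc ρ.map (fun x : X => g • x)
          = (μ.restrict (Set.univ ×ˢ B)).map ((fun x : X => g • x) ∘ Prod.fst) := by
            rw [hρdef, Measure.map_map (hmgX g) measurable_fst]
        _ = (μ.restrict (Set.univ ×ˢ B)).map
              (Prod.fst ∘ (fun p : X × Y => (g • p.1, (1 : H) • p.2))) := rfl
        _ = ((μ.restrict (Set.univ ×ˢ B)).map
              (fun p : X × Y => (g • p.1, (1 : H) • p.2))).map Prod.fst :=
            (Measure.map_map measurable_fst (hmT g 1)).symm
        _ = ((μ.map (fun p : X × Y => (g • p.1, (1 : H) • p.2))).restrict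
              (Set.univ ×ˢ B)).map Prod.fst := by
            rw [Measure.restrict_map (hmT g 1) hSm, hpre]
        _ = ρ := by rw [hinv g 1, hρdef]
    -- a.e. invariance of the density
    have hφg : ∀ g : G, (fun x : X => φ (g • x)) =ᵐ[mX] φ := by
      intro g
      have me : MeasurableEmbedding (fun x : X => g • x) :=
        (Homeomorph.smul g : X ≃ₜ X).toMeasurableEquiv.measurableEmbedding
      have h := me.rnDeriv_map ρ mX
      rw [hρinv g, hmarX g] at h
      exact h
    -- dichotomy for sublevel sets
    have hdich : ∀ t : ℝ≥0∞, mX {x | φ x < t} = 0 ∨ mX {x | φ x < t} = 1 := by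
      intro t
      set Sl : Set X := {x | φ x < t} with hSldef
      have hSlm : MeasurableSet Sl := hφm measurableSet_Iio
      have hnull : ∀ g : G, mX ((fun x : X => g • x) ⁻¹' Sl \ Sl) = 0 := by
        intro g
        refine measure_mono_null ?_ (ae_iff.1 (hφg g))
        intro x hx
        have h1 : φ (g • x) < t := hx.1
        have h2 : ¬ φ x < t := hx.2
        exact fun heq => h2 (heq ▸ h1)
      set E : Set (X × Y) :=
        (⋃ g : G, (fun x : X => g • x) ⁻¹' Sl) ×ˢ (Set.univ : Set Y) with hEdef
      have hEm : MeasurableSet E :=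
        (MeasurableSet.iUnion fun g => (hmgX g) hSlm).prod MeasurableSet.univ
      have hEinv : ∀ (g : G) (h : H),
          (fun p : X × Y => (g • p.1, h • p.2)) ⁻¹' E = E := by
        intro g h
        ext p
        simp only [hEdef, Set.mem_preimage, Set.mem_prod, Set.mem_univ, and_true,
          Set.mem_iUnion]
        constructor
        · rintro ⟨g', hg'⟩
          refine ⟨g' * g, ?_⟩
          rwa [mul_smul]
        · rintro ⟨k, hk⟩
          refine ⟨k * g⁻¹, ?_⟩
          show (k * g⁻¹) • (g • p.1) ∈ Sl
          rwa [smul_smul, mul_assoc, inv_mul_cancel, mul_one]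
      have hprodX : ∀ (U : Set X), MeasurableSet U →
          μ (U ×ˢ (Set.univ : Set Y)) = mX U := by
        intro U hU
        rw [hmX, Measure.map_apply measurable_fst hU]
        congr 1
        ext p; simp [Set.mem_prod]
      have hEμ : μ E = mX Sl := by
        refine le_antisymm ?_ ?_
        · have hsub : E ⊆ (Sl ×ˢ (Set.univ : Set Y)) ∪
              ((⋃ g : G, ((fun x : X => g • x) ⁻¹' Sl \ Sl)) ×ˢ (Set.univ : Set Y)) := by
            rintro ⟨x, y⟩ hp
            obtain ⟨hx, -⟩ := hp
            obtain ⟨g, hg⟩ := Set.mem_iUnion.1 hx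
            by_cases hxSl : x ∈ Sl
            · exact Or.inl ⟨hxSl, Set.mem_univ _⟩
            · exact Or.inr ⟨Set.mem_iUnion.2 ⟨g, hg, hxSl⟩, Set.mem_univ _⟩
          have hz : μ ((⋃ g : G, ((fun x : X => g • x) ⁻¹' Sl \ Sl)) ×ˢ
              (Set.univ : Set Y)) = 0 := by
            rw [hprodX _ (MeasurableSet.iUnion fun g => ((hmgX g) hSlm).diff hSlm)]
            exact measure_iUnion_null hnull
          calc μ E ≤ μ (Sl ×ˢ (Set.univ : Set Y)) + μ ((⋃ g : G,
                ((fun x : X => g • x) ⁻¹' Sl \ Sl)) ×ˢ (Set.univ : Set Y)) :=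
              (measure_mono hsub).trans (measure_union_le _ _)
            _ = mX Sl := by rw [hz, add_zero, hprodX _ hSlm]
        · rw [← hprodX _ hSlm]
          refine measure_mono ?_
          rintro ⟨x, y⟩ ⟨hx, -⟩
          refine ⟨Set.mem_iUnion.2 ⟨1, ?_⟩, Set.mem_univ _⟩
          simpa [one_smul] using hx
      rcases herg E hEm hEinv with h0 | h1
      · exact Or.inl (by rw [← hEμ, h0])
      · exact Or.inr (by rw [← hEμ, h1])
    obtain ⟨c, hcae⟩ := aux_ae_const_of_levels mX φ (fun t => hφm measurableSet_Iio) hdich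
    have hρA : ∀ A : Set X, MeasurableSet A → ρ A = c * mX A := by
      intro A hA
      rw [← hw, withDensity_apply φ hA]
      rw [lintegral_congr_ae (ae_restrict_of_ae hcae), setLIntegral_const A c]
    have hcval : c = μ.map Prod.snd B := by
      have h1 : ρ Set.univ = c := by
        rw [hρA Set.univ MeasurableSet.univ, measure_univ, mul_one]
      have h2 : ρ Set.univ = μ.map Prod.snd B := by
        rw [hρ Set.univ MeasurableSet.univ, Measure.map_apply measurable_snd hB]
        congr 1
        ext p; simp [Set.mem_prod]
      rw [← h1, h2]
    intro A hA
    rw [← hρ A hA, hρA A hA, hcval, mul_comm]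
  haveI : SigmaFinite (μ.map Prod.fst) := inferInstance
  haveI : SigmaFinite (μ.map Prod.snd) := inferInstance
  exact (Measure.prod_eq fun s t hs ht => key t ht s hs).symm
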